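/- Let X₁, X₂ be independent continuous random variables with finite Fisher information, λ ∈ [0,1], and set Y₁ = λX₁ + √(1-λ²)X₂, Y₂ = √(1-λ²)X₁ - λX₂. Then the conditional Fisher information J(Y₂|Y₁) := E_{y∼Y₁}[J(⟨Y₂|Y₁=y⟩)] equals (1-λ²)J(X₁) + λ²J(X₂). -/

import Mathlib

open MeasureTheory Filter

/-- Fisher information of a (differentiable) probability density `φ` on `ℝ`:
`J(φ) = ∫ φ'(x)² / φ(x) dx`. -/
noncomputable def fisherInfo (φ : ℝ → ℝ) : ℝ :=
  ∫ x, (deriv φ x) ^ 2 / φ x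

/-! ### Auxiliary lemmas -/

lemma my_integrable_of_integral_eq_one {φ : ℝ → ℝ} (h : ∫ x, φ x = 1) : Integrable φ := by
  by_contra hc
  rw [integral_undef hc] at h
  norm_num at h

lemma deriv_zero_of_nonneg {φ : ℝ → ℝ} (hnn : ∀ x, 0 ≤ φ x)
    {x : ℝ} (hx : φ x = 0) : deriv φ x = 0 := by
  have : IsLocalMin φ x := Filter.Eventually.of_forall (fun y => by rw [hx]; exact hnn y)
  exact this.deriv_eq_zero

lemma abs_deriv_le {φ : ℝ → ℝ} (hnn : ∀ x, 0 ≤ φ x) (x : ℝ) :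
    |deriv φ x| ≤ ((deriv φ x) ^ 2 / φ x + φ x) / 2 := by
  by_cases hx : φ x = 0
  · rw [hx, deriv_zero_of_nonneg hnn hx]; norm_num
  · have h0 : 0 < φ x := lt_of_le_of_ne (hnn x) (Ne.symm hx)
    have h1 : (deriv φ x) ^ 2 = ((deriv φ x) ^ 2 / φ x) * φ x := by field_simp
    have hg : 0 ≤ (deriv φ x) ^ 2 / φ x := div_nonneg (sq_nonneg _) h0.le
    rcases abs_cases (deriv φ x) with ⟨h, _⟩ | ⟨h, _⟩ <;> rw [h] <;>
      nlinarith [sq_nonneg ((deriv φ x) ^ 2 / φ x - φ x)]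

lemma integrable_deriv {φ : ℝ → ℝ} (hnn : ∀ x, 0 ≤ φ x)
    (hφ : Integrable φ) (hfin : Integrable (fun x => (deriv φ x) ^ 2 / φ x)) :
    Integrable (deriv φ) := by
  refine Integrable.mono' ((hfin.add hφ).div_const 2)
    (measurable_deriv φ).aestronglyMeasurable (Filter.Eventually.of_forall fun x => ?_)
  simpa using abs_deriv_le hnn x

lemma tendsto_atTop_zero' {φ : ℝ → ℝ} (hnn : ∀ x, 0 ≤ φ x) (hφ : Integrable φ)
    {c : ℝ} (hl : Tendsto φ atTop (nhds c)) : c = 0 := by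
  by_contra hc
  have hc0 : 0 ≤ c := le_of_tendsto_of_tendsto' tendsto_const_nhds hl (fun x => hnn x)
  have hcpos : 0 < c := lt_of_le_of_ne hc0 (Ne.symm hc)
  obtain ⟨M, hM⟩ :=
    (hl.eventually (eventually_ge_nhds (show c / 2 < c by linarith))).exists_forall_of_atTop
  have hconst : IntegrableOn (fun _ => c / 2 : ℝ → ℝ) (Set.Ici M) := by
    refine Integrable.mono' hφ.integrableOn aestronglyMeasurable_const ?_
    refine (ae_restrict_iff' measurableSet_Ici).2 (Filter.Eventually.of_forall fun x hx => ?_)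
    rw [Real.norm_eq_abs, abs_of_pos (by linarith)]
    exact hM x hx
  rw [integrableOn_const_iff] at hconst
  rcases hconst with h | h
  · simp at h; linarith
  · simp [Real.volume_Ici] at h

lemma tendsto_atBot_zero' {φ : ℝ → ℝ} (hnn : ∀ x, 0 ≤ φ x) (hφ : Integrable φ)
    {c : ℝ} (hl : Tendsto φ atBot (nhds c)) : c = 0 := by
  by_contra hc
  have hc0 : 0 ≤ c := le_of_tendsto_of_tendsto' tendsto_const_nhds hl (fun x => hnn x)
  have hcpos : 0 < c := lt_of_le_of_ne hc0 (Ne.symm hc)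
  obtain ⟨M, hM⟩ :=
    (hl.eventually (eventually_ge_nhds (show c / 2 < c by linarith))).exists_forall_of_atBot
  have hconst : IntegrableOn (fun _ => c / 2 : ℝ → ℝ) (Set.Iic M) := by
    refine Integrable.mono' hφ.integrableOn aestronglyMeasurable_const ?_
    refine (ae_restrict_iff' measurableSet_Iic).2 (Filter.Eventually.of_forall fun x hx => ?_)
    rw [Real.norm_eq_abs, abs_of_pos (by linarith)]
    exact hM x hx
  rw [integrableOn_const_iff] at hconst
  rcases hconst with h | h
  · simp at h; linarith
  · simp [Real.volume_Iic] at h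

lemma integral_deriv_eq_zero {φ : ℝ → ℝ} (hnn : ∀ x, 0 ≤ φ x) (hd : Differentiable ℝ φ)
    (hφ : Integrable φ) (hd' : Integrable (deriv φ)) : ∫ x, deriv φ x = 0 := by
  have hftc : ∀ x : ℝ, ∫ t in (0:ℝ)..x, deriv φ t = φ x - φ 0 := fun x =>
    intervalIntegral.integral_deriv_eq_sub (fun t _ => hd t) hd'.intervalIntegrable
  have htop : Tendsto (fun x => ∫ t in (0:ℝ)..x, deriv φ t) atTop
      (nhds (∫ t in Set.Ioi (0:ℝ), deriv φ t)) :=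
    intervalIntegral_tendsto_integral_Ioi 0 hd'.integrableOn tendsto_id
  have htopφ : Tendsto φ atTop (nhds (φ 0 + ∫ t in Set.Ioi (0:ℝ), deriv φ t)) := by
    have := htop.const_add (φ 0)
    simpa [hftc] using this
  have hbot : Tendsto (fun x => ∫ t in x..(0:ℝ), deriv φ t) atBot
      (nhds (∫ t in Set.Iic (0:ℝ), deriv φ t)) :=
    intervalIntegral_tendsto_integral_Iic 0 hd'.integrableOn tendsto_id
  have hbotφ : Tendsto φ atBot (nhds (φ 0 - ∫ t in Set.Iic (0:ℝ), deriv φ t)) := by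
    have := hbot.const_sub (φ 0)
    have heq : ∀ x : ℝ, φ 0 - ∫ t in x..(0:ℝ), deriv φ t = φ x := by
      intro x
      have := intervalIntegral.integral_deriv_eq_sub (f := φ) (a := x) (b := 0)
        (fun t _ => hd t) hd'.intervalIntegrable
      rw [this]; ring
    simpa [heq] using this
  have h1 := tendsto_atTop_zero' hnn hφ htopφ
  have h2 := tendsto_atBot_zero' hnn hφ hbotφ
  have hsplit : ∫ x, deriv φ x
      = (∫ t in Set.Iic (0:ℝ), deriv φ t) + ∫ t in Set.Ioi (0:ℝ), deriv φ t := by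
    rw [← setIntegral_union (Set.Iic_disjoint_Ioi le_rfl) measurableSet_Ioi
      hd'.integrableOn hd'.integrableOn, Set.Iic_union_Ioi]
    simp [Measure.restrict_univ]
  rw [hsplit]; linarith

/-! ### The rotation -/

noncomputable def rotMap (a b : ℝ) : (ℝ × ℝ) →ₗ[ℝ] (ℝ × ℝ) where
  toFun := fun p => (a * p.1 + b * p.2, b * p.1 - a * p.2)
  map_add' := fun p q => by simp only [Prod.fst_add, Prod.snd_add, Prod.mk_add_mk]; ring_nf
  map_smul' := fun c p => by
    simp only [Prod.smul_fst, Prod.smul_snd, RingHom.id_apply, Prod.smul_mk, smul_eq_mul]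
    exact Prod.ext (by ring) (by ring)

lemma rotMap_invol {a b : ℝ} (hab : a ^ 2 + b ^ 2 = 1) :
    (rotMap a b).comp (rotMap a b) = LinearMap.id := by
  ext p <;> simp [rotMap] <;> nlinarith

lemma rotMap_det_ne {a b : ℝ} (hab : a ^ 2 + b ^ 2 = 1) :
    LinearMap.det (rotMap a b) ≠ 0 ∧ |(LinearMap.det (rotMap a b))⁻¹| = 1 := by
  have h : LinearMap.det (rotMap a b) * LinearMap.det (rotMap a b) = 1 := by
    rw [← LinearMap.det_comp, rotMap_invol hab, LinearMap.det_id]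
  constructor
  · intro h0; rw [h0] at h; norm_num at h
  · have : |LinearMap.det (rotMap a b)| = 1 := by
      rcases mul_self_eq_one_iff.1 h with h1 | h1 <;> rw [h1] <;> norm_num
    rw [abs_inv, this]; norm_num

lemma rotMap_measurePreserving {a b : ℝ} (hab : a ^ 2 + b ^ 2 = 1) :
    MeasurePreserving (fun p : ℝ × ℝ => (a * p.1 + b * p.2, b * p.1 - a * p.2))
      volume volume := by
  obtain ⟨hdet, habs⟩ := rotMap_det_ne hab
  have hmap := Measure.map_linearMap_addHaar_eq_smul_addHaar (μ := volume) hdet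
  rw [habs] at hmap
  simp only [ENNReal.ofReal_one, one_smul] at hmap
  exact ⟨(rotMap a b).continuous_of_finiteDimensional.measurable, hmap⟩

noncomputable def rotEquiv (a b : ℝ) (hab : a ^ 2 + b ^ 2 = 1) : ℝ × ℝ ≃ᵐ ℝ × ℝ where
  toFun := fun p => (a * p.1 + b * p.2, b * p.1 - a * p.2)
  invFun := fun p => (a * p.1 + b * p.2, b * p.1 - a * p.2)
  left_inv := fun p => by
    have := congrFun (congrArg (fun f => (DFunLike.coe f : ℝ × ℝ → ℝ × ℝ)) (rotMap_invol hab)) p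
    simpa [rotMap] using this
  right_inv := fun p => by
    have := congrFun (congrArg (fun f => (DFunLike.coe f : ℝ × ℝ → ℝ × ℝ)) (rotMap_invol hab)) p
    simpa [rotMap] using this
  measurable_toFun := (rotMap a b).continuous_of_finiteDimensional.measurable
  measurable_invFun := (rotMap a b).continuous_of_finiteDimensional.measurable

lemma rot_integral {a b : ℝ} (hab : a ^ 2 + b ^ 2 = 1) (G : ℝ × ℝ → ℝ) :
    ∫ p : ℝ × ℝ, G (a * p.1 + b * p.2, b * p.1 - a * p.2) = ∫ p : ℝ × ℝ, G p := by
  have h := (rotMap_measurePreserving hab).map_eq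
  conv_rhs => rw [← h]
  rw [show Measure.map (fun p : ℝ × ℝ => (a * p.1 + b * p.2, b * p.1 - a * p.2)) volume
      = Measure.map (rotEquiv a b hab) volume from rfl,
    (rotEquiv a b hab).measurableEmbedding.integral_map]
  rfl

lemma rot_integrable {a b : ℝ} (hab : a ^ 2 + b ^ 2 = 1) {G : ℝ × ℝ → ℝ}
    (hG : Integrable G) :
    Integrable (fun p : ℝ × ℝ => G (a * p.1 + b * p.2, b * p.1 - a * p.2)) := by
  have h := (rotMap_measurePreserving hab).map_eq
  rw [← h] at hG
  exact ((rotEquiv a b hab).measurableEmbedding.integrable_map_iff).1 hG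

noncomputable def Gfun (φ₁ φ₂ : ℝ → ℝ) (a b : ℝ) (p : ℝ × ℝ) : ℝ :=
  b ^ 2 * ((deriv φ₁ p.1) ^ 2 / φ₁ p.1 * φ₂ p.2)
    + a ^ 2 * (φ₁ p.1 * ((deriv φ₂ p.2) ^ 2 / φ₂ p.2))
    - 2 * a * b * (deriv φ₁ p.1 * deriv φ₂ p.2)

lemma Gfun_zero {φ₁ φ₂ : ℝ → ℝ} (h₁nn : ∀ x, 0 ≤ φ₁ x) (h₂nn : ∀ x, 0 ≤ φ₂ x)
    (a b : ℝ) {u v : ℝ} (h : φ₁ u * φ₂ v = 0) : Gfun φ₁ φ₂ a b (u, v) = 0 := by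
  rcases mul_eq_zero.1 h with h0 | h0
  · have hd := deriv_zero_of_nonneg h₁nn h0
    simp [Gfun, h0, hd]
  · have hd := deriv_zero_of_nonneg h₂nn h0
    simp [Gfun, h0, hd]

lemma slice_eq (φ₁ φ₂ : ℝ → ℝ) (h₁nn : ∀ x, 0 ≤ φ₁ x) (h₂nn : ∀ x, 0 ≤ φ₂ x)
    (h₁diff : Differentiable ℝ φ₁) (h₂diff : Differentiable ℝ φ₂) (a b y : ℝ)
    (hy : Integrable (fun t => φ₁ (a * y + b * t) * φ₂ (b * y - a * t))) :
    (∫ t, φ₁ (a * y + b * t) * φ₂ (b * y - a * t)) *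
      fisherInfo (fun t => φ₁ (a * y + b * t) * φ₂ (b * y - a * t) /
        ∫ s, φ₁ (a * y + b * s) * φ₂ (b * y - a * s))
      = ∫ t, Gfun φ₁ φ₂ a b (a * y + b * t, b * y - a * t) := by
  set Z := ∫ s, φ₁ (a * y + b * s) * φ₂ (b * y - a * s) with hZdef
  by_cases hZ : Z = 0
  · rw [hZ, zero_mul]
    have hae : (fun t => φ₁ (a * y + b * t) * φ₂ (b * y - a * t)) =ᵐ[volume] 0 :=
      (integral_eq_zero_iff_of_nonneg
        (fun t => mul_nonneg (h₁nn _) (h₂nn _)) hy).1 hZ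
    have hG0 : (fun t => Gfun φ₁ φ₂ a b (a * y + b * t, b * y - a * t)) =ᵐ[volume] 0 := by
      filter_upwards [hae] with t ht
      exact Gfun_zero h₁nn h₂nn a b ht
    rw [integral_congr_ae hG0]; simp
  · have hderiv : ∀ t, deriv (fun t => φ₁ (a * y + b * t) * φ₂ (b * y - a * t) / Z) t
        = (b * deriv φ₁ (a * y + b * t) * φ₂ (b * y - a * t)
            - a * φ₁ (a * y + b * t) * deriv φ₂ (b * y - a * t)) / Z := by
      intro t
      have h1 : HasDerivAt (fun t : ℝ => a * y + b * t) b t := by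
        simpa using ((hasDerivAt_id t).const_mul b).const_add (a * y)
      have h2 : HasDerivAt (fun t : ℝ => b * y - a * t) (-a) t := by
        simpa using ((hasDerivAt_id t).const_mul a).const_sub (b * y)
      have hc1 : HasDerivAt (fun t : ℝ => φ₁ (a * y + b * t))
          (deriv φ₁ (a * y + b * t) * b) t :=
        (h₁diff (a * y + b * t)).hasDerivAt.comp t h1
      have hc2 : HasDerivAt (fun t : ℝ => φ₂ (b * y - a * t))
          (deriv φ₂ (b * y - a * t) * (-a)) t :=
        (h₂diff (b * y - a * t)).hasDerivAt.comp t h2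
      rw [HasDerivAt.deriv (f := fun t => φ₁ (a * y + b * t) * φ₂ (b * y - a * t) / Z)
        ((hc1.mul hc2).div_const Z)]
      ring
    have hpt : ∀ t, (deriv (fun t => φ₁ (a * y + b * t) * φ₂ (b * y - a * t) / Z) t) ^ 2 /
        (φ₁ (a * y + b * t) * φ₂ (b * y - a * t) / Z)
        = Gfun φ₁ φ₂ a b (a * y + b * t, b * y - a * t) / Z := by
      intro t
      rw [hderiv t]
      by_cases hP : φ₁ (a * y + b * t) * φ₂ (b * y - a * t) = 0
      · rw [Gfun_zero h₁nn h₂nn a b hP, hP]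
        rcases mul_eq_zero.1 hP with h0 | h0
        · have hd := deriv_zero_of_nonneg h₁nn h0
          simp [h0, hd]
        · have hd := deriv_zero_of_nonneg h₂nn h0
          simp [h0, hd]
      · rcases mul_ne_zero_iff.1 hP with ⟨hP1, hP2⟩
        simp only [Gfun]
        field_simp
        ring
    have : fisherInfo (fun t => φ₁ (a * y + b * t) * φ₂ (b * y - a * t) / Z)
        = (∫ t, Gfun φ₁ φ₂ a b (a * y + b * t, b * y - a * t)) / Z := by
      rw [fisherInfo, ← integral_div]
      exact integral_congr_ae (Filter.Eventually.of_forall hpt)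
    rw [this, mul_div_cancel₀ _ hZ]

/-- Let `X₁ ∼ φ₁`, `X₂ ∼ φ₂` be independent continuous random variables with differentiable
densities of finite Fisher information, `λ ∈ [0,1]`, and `Y₁ = λX₁ + √(1-λ²)X₂`,
`Y₂ = √(1-λ²)X₁ - λX₂`.  Then the conditional Fisher information
`J(Y₂|Y₁) = E_{y∼Y₁}[J(⟨Y₂|Y₁=y⟩)]` equals `(1-λ²)J(X₁) + λ²J(X₂)`.  Here the density of
`Y₁` is `φ_{Y₁}(y) = ∫ φ₁(λy+√(1-λ²)t)·φ₂(√(1-λ²)y-λt) dt` and the conditional density of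
`Y₂` given `Y₁ = y` is `t ↦ φ₁(λy+√(1-λ²)t)·φ₂(√(1-λ²)y-λt)/φ_{Y₁}(y)`. -/
theorem conditional_fisher_rotation (φ₁ φ₂ : ℝ → ℝ)
    (h₁nn : ∀ x, 0 ≤ φ₁ x) (h₂nn : ∀ x, 0 ≤ φ₂ x)
    (h₁int : ∫ x, φ₁ x = 1) (h₂int : ∫ x, φ₂ x = 1)
    (h₁diff : Differentiable ℝ φ₁) (h₂diff : Differentiable ℝ φ₂)
    (h₁fin : Integrable (fun x => (deriv φ₁ x) ^ 2 / φ₁ x))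
    (h₂fin : Integrable (fun x => (deriv φ₂ x) ^ 2 / φ₂ x))
    (lam : ℝ) (hlam : lam ∈ Set.Icc (0:ℝ) 1) :
    (∫ y, (∫ t, φ₁ (lam * y + Real.sqrt (1 - lam ^ 2) * t)
              * φ₂ (Real.sqrt (1 - lam ^ 2) * y - lam * t)) *
        fisherInfo (fun t =>
          φ₁ (lam * y + Real.sqrt (1 - lam ^ 2) * t)
            * φ₂ (Real.sqrt (1 - lam ^ 2) * y - lam * t) /
          ∫ s, φ₁ (lam * y + Real.sqrt (1 - lam ^ 2) * s)
            * φ₂ (Real.sqrt (1 - lam ^ 2) * y - lam * s)))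
      = (1 - lam ^ 2) * fisherInfo φ₁ + lam ^ 2 * fisherInfo φ₂ := by
  obtain ⟨hl0, hl1⟩ := hlam
  set b := Real.sqrt (1 - lam ^ 2) with hb
  have hb2 : b ^ 2 = 1 - lam ^ 2 := Real.sq_sqrt (by nlinarith)
  have hab : lam ^ 2 + b ^ 2 = 1 := by rw [hb2]; ring
  have hφ₁ : Integrable φ₁ := my_integrable_of_integral_eq_one h₁int
  have hφ₂ : Integrable φ₂ := my_integrable_of_integral_eq_one h₂int
  have hd₁ : Integrable (deriv φ₁) := integrable_deriv h₁nn hφ₁ h₁fin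
  have hd₂ : Integrable (deriv φ₂) := integrable_deriv h₂nn hφ₂ h₂fin
  have hz₁ : ∫ x, deriv φ₁ x = 0 := integral_deriv_eq_zero h₁nn h₁diff hφ₁ hd₁
  have hz₂ : ∫ x, deriv φ₂ x = 0 := integral_deriv_eq_zero h₂nn h₂diff hφ₂ hd₂
  have I1 : Integrable (fun z : ℝ × ℝ => (deriv φ₁ z.1) ^ 2 / φ₁ z.1 * φ₂ z.2)
      (volume.prod volume) := h₁fin.mul_prod hφ₂
  have I2 : Integrable (fun z : ℝ × ℝ => φ₁ z.1 * ((deriv φ₂ z.2) ^ 2 / φ₂ z.2))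
      (volume.prod volume) := hφ₁.mul_prod h₂fin
  have I3 : Integrable (fun z : ℝ × ℝ => deriv φ₁ z.1 * deriv φ₂ z.2)
      (volume.prod volume) := hd₁.mul_prod hd₂
  have hGint : Integrable (Gfun φ₁ φ₂ lam b) := by
    rw [Measure.volume_eq_prod]
    exact ((I1.const_mul (b ^ 2)).add (I2.const_mul (lam ^ 2))).sub
      (I3.const_mul (2 * lam * b))
  have hPint : Integrable (fun p : ℝ × ℝ => φ₁ p.1 * φ₂ p.2) := by
    rw [Measure.volume_eq_prod]; exact hφ₁.mul_prod hφ₂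
  have hPR := rot_integrable hab hPint
  have hGR := rot_integrable hab hGint
  have hae : ∀ᵐ y : ℝ, Integrable (fun t => φ₁ (lam * y + b * t) * φ₂ (b * y - lam * t)) := by
    rw [Measure.volume_eq_prod] at hPR
    exact hPR.prod_right_ae
  calc (∫ y, (∫ t, φ₁ (lam * y + b * t) * φ₂ (b * y - lam * t)) *
        fisherInfo (fun t => φ₁ (lam * y + b * t) * φ₂ (b * y - lam * t) /
          ∫ s, φ₁ (lam * y + b * s) * φ₂ (b * y - lam * s)))
      = ∫ y, ∫ t, Gfun φ₁ φ₂ lam b (lam * y + b * t, b * y - lam * t) := by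
        refine integral_congr_ae ?_
        filter_upwards [hae] with y hy
        exact slice_eq φ₁ φ₂ h₁nn h₂nn h₁diff h₂diff lam b y hy
    _ = ∫ p : ℝ × ℝ, Gfun φ₁ φ₂ lam b (lam * p.1 + b * p.2, b * p.1 - lam * p.2) := by
        rw [Measure.volume_eq_prod] at hGR
        rw [Measure.volume_eq_prod]
        exact integral_integral hGR
    _ = ∫ p : ℝ × ℝ, Gfun φ₁ φ₂ lam b p := rot_integral hab _
    _ = (1 - lam ^ 2) * fisherInfo φ₁ + lam ^ 2 * fisherInfo φ₂ := by
        rw [Measure.volume_eq_prod]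
        simp only [Gfun]
        have J1 : Integrable (fun z : ℝ × ℝ => b ^ 2 * ((deriv φ₁ z.1) ^ 2 / φ₁ z.1 * φ₂ z.2))
            (volume.prod volume) := I1.const_mul (b ^ 2)
        have J2 : Integrable (fun z : ℝ × ℝ => lam ^ 2 * (φ₁ z.1 * ((deriv φ₂ z.2) ^ 2 / φ₂ z.2)))
            (volume.prod volume) := I2.const_mul (lam ^ 2)
        have J3 : Integrable (fun z : ℝ × ℝ => 2 * lam * b * (deriv φ₁ z.1 * deriv φ₂ z.2))
            (volume.prod volume) := I3.const_mul (2 * lam * b)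
        have J12 : Integrable (fun z : ℝ × ℝ => b ^ 2 * ((deriv φ₁ z.1) ^ 2 / φ₁ z.1 * φ₂ z.2)
            + lam ^ 2 * (φ₁ z.1 * ((deriv φ₂ z.2) ^ 2 / φ₂ z.2))) (volume.prod volume) := J1.add J2
        rw [integral_sub J12 J3, integral_add J1 J2,
          integral_const_mul, integral_const_mul, integral_const_mul,
          integral_prod_mul (f := fun x => (deriv φ₁ x) ^ 2 / φ₁ x) (g := φ₂),
          integral_prod_mul (f := φ₁) (g := fun x => (deriv φ₂ x) ^ 2 / φ₂ x),
          integral_prod_mul (f := deriv φ₁) (g := deriv φ₂),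
          h₁int, h₂int, hz₁, hz₂]
        simp only [fisherInfo]
        rw [hb2]; ring
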